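/- For any ℓ ≥ 1, the operators C_{ℓ,0}^{(α)} and C_{ℓ,1}^{(α)} admit the differential expressions: C_{ℓ,0}^{(α)} = p_ℓ/α (operator of multiplication by p_ℓ/α), and C_{ℓ,1}^{(α)} = C(ℓ+1,2)·(b/α)·p_{ℓ+1} + (ℓ+1)∑_{m≥1} p_{m+ℓ+1} (m ∂/∂p_m) + ((ℓ+1)/(2α)) ∑_{1≤i≤ℓ} p_i p_{ℓ+1−i}, where b := α−1. -/

import Mathlib

open scoped Classical

noncomputable section

/-- The base field `ℚ(α)` of rational functions in the Jack parameter `α`. -/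
abbrev F : Type := RatFunc ℚ

/-- The Jack deformation parameter `α`. -/
def alpha : F := RatFunc.X

/-- An integer partition, encoded as a multiset of positive integers (its parts). -/
abbrev JPartition : Type := Multiset ℕ+

/-- The size `|λ|` of a partition. -/
def psize (l : JPartition) : ℕ := (l.map fun i => (i : ℕ)).sum

/-- The length `ℓ(λ)` of a partition. -/
def plen (l : JPartition) : ℕ := Multiset.card l

/-- `m_i(λ)`, the number of parts of `λ` equal to `i`. -/
def pmult (l : JPartition) (i : ℕ+) : ℕ := Multiset.count i l

/-- `λ ∪ 1^k`, adjoining `k` parts equal to `1`. -/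
def addOnes (l : JPartition) (k : ℕ) : JPartition := l + Multiset.replicate k 1

/-- `λ̃`, the partition obtained by deleting all parts equal to `1`. -/
def removeOnes (l : JPartition) : JPartition := Multiset.filter (fun i => i ≠ 1) l

/-- Exponent vectors of monomials in the power-sum generators `p₁, p₂, …`. -/
abbrev Exp : Type := ℕ+ →₀ ℕ

/-- The exponent vector of the monomial `p_λ`. -/
def toExp (l : JPartition) : Exp := l.toFinset.sum fun i => Finsupp.single i (Multiset.count i l)

/-- The partition corresponding to an exponent vector. -/
def toPart (m : Exp) : JPartition := m.sum fun i k => Multiset.replicate k i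

/-- The weighted degree (`deg p_i = i`) of an exponent vector; this is the size of the
corresponding partition. -/
def wt (m : Exp) : ℕ := m.sum fun i k => k * (i : ℕ)

/-- The algebra `ℚ(α)[p₁, p₂, …]` of symmetric functions written in the power-sum basis. -/
abbrev SymA : Type := MvPolynomial ℕ+ F

/-- The power-sum monomial `p_λ`. -/
def pPow (l : JPartition) : SymA := (l.map fun i => MvPolynomial.X i).prod

/-- `z_λ α^{ℓ(λ)}`, attached to the exponent vector of `p_λ`. -/
def zalpha (m : Exp) : F :=
  algebraMap ℚ F (m.prod fun i k => (Nat.factorial k : ℚ) * ((i : ℕ) : ℚ) ^ k) *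
    alpha ^ (m.sum fun _ k => k)

/-- The `α`-deformed Hall scalar product: `⟨p_λ, p_μ⟩ = δ_{λμ} z_λ α^{ℓ(λ)}`. -/
def hall (f g : SymA) : F :=
  ∑ m ∈ f.support, MvPolynomial.coeff m f * MvPolynomial.coeff m g * zalpha m

/-- The parts of a partition, sorted in weakly decreasing order. -/
def sortedParts (l : JPartition) : List ℕ := ((l.map fun i => (i : ℕ)).sort (· ≤ ·)).reverse

/-- The sum of the `k` largest parts of a partition. -/
def topSum (l : JPartition) (k : ℕ) : ℕ := ((sortedParts l).take k).sum

/-- The dominance order on partitions: `μ ⊴ λ`. -/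
def dominates (mu lam : JPartition) : Prop :=
  psize mu = psize lam ∧ ∀ k, topSum mu k ≤ topSum lam k

/-- Evaluation of a symmetric function (in power-sum coordinates) in `N` variables
`x₁, …, x_N`: it sends `p_i ↦ x₁^i + ⋯ + x_N^i`. -/
def evalN (N : ℕ) : SymA →ₐ[F] MvPolynomial (Fin N) F :=
  MvPolynomial.aeval fun i : ℕ+ => ∑ j : Fin N, MvPolynomial.X j ^ (i : ℕ)

/-- The exponent of the monomial `x₁^{μ₁} ⋯ x_s^{μ_s}` in `N` variables, for `μ` a
partition; its coefficient in a symmetric polynomial is the coefficient of the monomial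
symmetric function `m_μ` (provided `N ≥ ℓ(μ)`). -/
def xexp (mu : JPartition) (N : ℕ) : Fin N →₀ ℕ :=
  Finsupp.equivFunOnFinite.symm fun j => (sortedParts mu).getD (j : ℕ) 0

/-- The defining properties of the family of Jack polynomials `J_λ^{(α)}` (Macdonald's
characterization): orthogonality for the `α`-deformed Hall product, triangularity with
respect to monomial symmetric functions in dominance order, and normalization
`[p_{1^n}] J_λ^{(α)} = 1`. -/
structure IsJackFamily (J : JPartition → SymA) : Prop where
  orthogonal : ∀ l m : JPartition, l ≠ m → hall (J l) (J m) = 0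
  triangular : ∀ l m : JPartition, ¬ dominates m l →
    MvPolynomial.coeff (xexp m (psize l + psize m + plen m))
      (evalN (psize l + psize m + plen m) (J l)) = 0
  normalized : ∀ l : JPartition, MvPolynomial.coeff (Finsupp.single 1 (psize l)) (J l) = 1

/-- The Jack character `θ_μ^{(α)}(λ)`. -/
def theta (J : JPartition → SymA) (mu lam : JPartition) : F :=
  if psize lam < psize mu then 0
  else (Nat.choose (psize lam - psize mu + pmult mu 1) (pmult mu 1) : F) *
    MvPolynomial.coeff (toExp (addOnes mu (psize lam - psize mu))) (J lam)

/-- `g` is the family of structure coefficients of Jack characters: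
`θ_μ^{(α)} θ_ν^{(α)} = ∑_π g^π_{μ,ν}(α) θ_π^{(α)}` (as functions on Young diagrams,
with finitely many nonzero terms). -/
def IsStructCoeffs (J : JPartition → SymA) (g : JPartition → JPartition → JPartition → F) :
    Prop :=
  (∀ mu nu : JPartition, {pi : JPartition | g pi mu nu ≠ 0}.Finite) ∧
  ∀ mu nu lam : JPartition,
    theta J mu lam * theta J nu lam = ∑ᶠ pi : JPartition, g pi mu nu * theta J pi lam


/-- The polynomial algebra `ℚ(α)[p₁,p₂,…][y₀,y₁,…]` containing the catalytic variables. -/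
abbrev PY : Type := MvPolynomial (ℕ+ ⊕ ℕ) F

/-- The variable `p_i` inside `PY`. -/
def pv (i : ℕ+) : PY := MvPolynomial.X (Sum.inl i)

/-- The catalytic variable `y_j` inside `PY`. -/
def yv (j : ℕ) : PY := MvPolynomial.X (Sum.inr j)

/-- The operator `Y₊ = ∑_{i≥0} y_{i+1} ∂/∂y_i`. -/
def Yplus (f : PY) : PY := ∑ᶠ j : ℕ, yv (j + 1) * MvPolynomial.pderiv (Sum.inr j) f

/-- The operator
`Γ_Y = (1+b) ∑_{i,j≥1} y_{i+j} j ∂²/(∂y_{i-1}∂p_j) + ∑_{i,j≥1} y_i p_j ∂/∂y_{i+j-1}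
      + b ∑_{i≥1} y_{i+1} i ∂/∂y_i`, with `b = α - 1`. -/
def GammaY (f : PY) : PY :=
  alpha • (∑ᶠ i : ℕ+, ∑ᶠ j : ℕ+, ((j : ℕ) : F) •
      (yv ((i : ℕ) + (j : ℕ)) *
        MvPolynomial.pderiv (Sum.inl j) (MvPolynomial.pderiv (Sum.inr ((i : ℕ) - 1)) f)))
  + (∑ᶠ i : ℕ+, ∑ᶠ j : ℕ+,
      yv (i : ℕ) * pv j * MvPolynomial.pderiv (Sum.inr ((i : ℕ) + (j : ℕ) - 1)) f)
  + (alpha - 1) • (∑ᶠ i : ℕ+, ((i : ℕ) : F) •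
      (yv ((i : ℕ) + 1) * MvPolynomial.pderiv (Sum.inr (i : ℕ)) f))

/-- The operator `Θ_Y = ∑_{i≥1} p_i ∂/∂y_i`. -/
def ThetaY (f : PY) : PY := ∑ᶠ i : ℕ+, pv i * MvPolynomial.pderiv (Sum.inr (i : ℕ)) f

/-- Ordered composite of the operators `Y₊` (for `true`) and `Γ_Y` (for `false`). -/
def wordOp : List Bool → PY → PY
  | [], f => f
  | b :: w, f => (if b then Yplus else GammaY) (wordOp w f)

/-- Projection `PY → SymA` killing the catalytic variables. -/
def dropY : PY →ₐ[F] SymA :=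
  MvPolynomial.aeval fun v => match v with
    | Sum.inl i => MvPolynomial.X i
    | Sum.inr _ => 0

/-- `Bc n ℓ` is the coefficient of `u^ℓ` in the operator
`B_n^{(α)}(p, u) = Θ_Y (Γ_Y + u Y₊)^n (y₀ / (1+b))`, viewed as an operator on `ℚ(α)[p]`. -/
def Bc (n ℓ : ℕ) (f : SymA) : SymA :=
  dropY (ThetaY (∑ s ∈ Finset.univ.filter
      (fun s : Fin n → Bool => (Finset.univ.filter fun i => s i = true).card = ℓ),
    wordOp (List.ofFn s) (alpha⁻¹ • (yv 0 * MvPolynomial.rename Sum.inl f))))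

/-- Matrix entries of `Bc n ℓ` in the basis of power-sum monomials. -/
def Bmat (n ℓ : ℕ) (m m' : Exp) : F :=
  MvPolynomial.coeff m (Bc n ℓ (MvPolynomial.monomial m' 1))

/-- The adjoint of `Bc n ℓ` with respect to the `α`-deformed Hall scalar product
(`⟨Bperp f, g⟩ = ⟨f, Bc g⟩`), given by its matrix in the power-sum basis. -/
def Bperp (n ℓ : ℕ) (f : SymA) : SymA :=
  ∑ m' ∈ f.support, MvPolynomial.coeff m' f •
    ∑ᶠ m : Exp, (Bmat n ℓ m' m * zalpha m' / zalpha m) • (MvPolynomial.monomial m (1 : F))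



/-- The operator `C_{ℓ,k}^{(α)}(p) := (ℓ+k) [t^{k+ℓ}] C_ℓ^{(α)}(t,p)`, where
`C_ℓ^{(α)}(t,p) = [u^ℓ] B_∞^{(α)}(t,p,u)`; since the `t^n`-coefficient of `C_ℓ^{(α)}` is
`(1/n) Bc n ℓ`, this is exactly the operator `Bc (ℓ+k) ℓ`. -/
def Clk (ℓ k : ℕ) (f : SymA) : SymA := Bc (ℓ + k) ℓ f

/-! ### Auxiliary machinery for `statement16` -/

namespace Statement16Aux

open MvPolynomial Finset

/-- `p` variable with a natural index (zero if the index is `0`). -/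
def pn (m : ℕ) : PY := if h : 0 < m then pv ⟨m, h⟩ else 0

/-- `X` variable of `SymA` with a natural index (zero if the index is `0`). -/
def Xn (m : ℕ) : SymA := if h : 0 < m then MvPolynomial.X ⟨m, h⟩ else 0

/-- A polynomial not involving the catalytic variables. -/
def YFree (q : PY) : Prop := ∀ j : ℕ, MvPolynomial.pderiv (Sum.inr j) q = 0

lemma yfree_rename (h : SymA) : YFree (MvPolynomial.rename Sum.inl h) := by
  intro j
  apply MvPolynomial.pderiv_eq_zero_of_notMem_vars
  intro hmem
  rcases MvPolynomial.mem_vars_rename _ _ hmem with ⟨i, _, hi⟩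
  exact Sum.inl_ne_inr hi

lemma yfree_smul (c : F) {q : PY} (h : YFree q) : YFree (c • q) := by
  intro j
  rw [Derivation.map_smul, h j, smul_zero]

lemma yfree_pv_mul (j : ℕ+) {q : PY} (h : YFree q) : YFree (pv j * q) := by
  intro k
  rw [MvPolynomial.pderiv_mul, h k, mul_zero, add_zero, pv,
    MvPolynomial.pderiv_X_of_ne (by simp), zero_mul]

lemma yfree_pn_mul (m : ℕ) {q : PY} (h : YFree q) : YFree (pn m * q) := by
  unfold pn
  split
  · exact yfree_pv_mul _ h
  · intro k; rw [zero_mul, map_zero]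

lemma pderiv_inr_yv_mul (k b : ℕ) {q : PY} (hq : YFree q) :
    MvPolynomial.pderiv (Sum.inr k : ℕ+ ⊕ ℕ) (yv b * q) = if k = b then q else 0 := by
  rw [MvPolynomial.pderiv_mul, hq k, mul_zero, add_zero, yv, MvPolynomial.pderiv_X]
  rw [Pi.single_apply]
  by_cases h : k = b
  · simp [h]
  · simp [h]
    exact fun hbk => absurd hbk.symm h

/-! #### Linearity of `Yplus` and `ThetaY` -/

lemma Yplus_support (h : PY) :
    (Function.support fun k : ℕ => yv (k + 1) * MvPolynomial.pderiv (Sum.inr k) h).Finite := by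
  apply Set.Finite.subset (Set.Finite.preimage (Sum.inr_injective.injOn) h.vars.finite_toSet)
  intro k hk
  simp only [Function.mem_support] at hk
  have : MvPolynomial.pderiv (Sum.inr k : ℕ+ ⊕ ℕ) h ≠ 0 := by
    intro h0; rw [h0, mul_zero] at hk; exact hk rfl
  simp only [Set.mem_preimage, Finset.mem_coe]
  by_contra hv
  exact this (MvPolynomial.pderiv_eq_zero_of_notMem_vars hv)

lemma ThetaY_support (h : PY) :
    (Function.support fun i : ℕ+ => pv i * MvPolynomial.pderiv (Sum.inr (i : ℕ)) h).Finite := by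
  have hinj : Function.Injective fun i : ℕ+ => (Sum.inr (i : ℕ) : ℕ+ ⊕ ℕ) := by
    intro a b hab
    simpa [PNat.coe_inj] using hab
  apply Set.Finite.subset (Set.Finite.preimage (hinj.injOn) h.vars.finite_toSet)
  intro k hk
  simp only [Function.mem_support] at hk
  have : MvPolynomial.pderiv (Sum.inr (k : ℕ) : ℕ+ ⊕ ℕ) h ≠ 0 := by
    intro h0; rw [h0, mul_zero] at hk; exact hk rfl
  simp only [Set.mem_preimage, Finset.mem_coe]
  by_contra hv
  exact this (MvPolynomial.pderiv_eq_zero_of_notMem_vars hv)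

lemma Yplus_zero : Yplus 0 = 0 := by
  unfold Yplus
  have h : ∀ k : ℕ, yv (k + 1) * MvPolynomial.pderiv (Sum.inr k) (0 : PY) = 0 :=
    fun k => by rw [map_zero, mul_zero]
  rw [finsum_congr h, finsum_zero]

lemma Yplus_add (h1 h2 : PY) : Yplus (h1 + h2) = Yplus h1 + Yplus h2 := by
  unfold Yplus
  rw [← finsum_add_distrib (Yplus_support h1) (Yplus_support h2)]
  exact finsum_congr fun k => by rw [map_add, mul_add]

lemma Yplus_smul (c : F) (h : PY) : Yplus (c • h) = c • Yplus h := by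
  unfold Yplus
  have h1 : ∀ k : ℕ, yv (k + 1) * MvPolynomial.pderiv (Sum.inr k) (c • h)
      = c • (yv (k + 1) * MvPolynomial.pderiv (Sum.inr k) h) :=
    fun k => by rw [Derivation.map_smul, mul_smul_comm]
  rw [finsum_congr h1, ← smul_finsum' c (Yplus_support h)]

lemma Yplus_sum {ι : Type*} (s : Finset ι) (φ : ι → PY) :
    Yplus (∑ i ∈ s, φ i) = ∑ i ∈ s, Yplus (φ i) := by
  classical
  induction s using Finset.induction_on with
  | empty => simpa using Yplus_zero
  | insert _ _ hx ih => rw [Finset.sum_insert hx, Finset.sum_insert hx, Yplus_add, ih]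

lemma ThetaY_zero : ThetaY 0 = 0 := by
  unfold ThetaY
  have h : ∀ k : ℕ+, pv k * MvPolynomial.pderiv (Sum.inr (k : ℕ)) (0 : PY) = 0 :=
    fun k => by rw [map_zero, mul_zero]
  rw [finsum_congr h, finsum_zero]

lemma ThetaY_add (h1 h2 : PY) : ThetaY (h1 + h2) = ThetaY h1 + ThetaY h2 := by
  unfold ThetaY
  rw [← finsum_add_distrib (ThetaY_support h1) (ThetaY_support h2)]
  exact finsum_congr fun k => by rw [map_add, mul_add]

lemma ThetaY_smul (c : F) (h : PY) : ThetaY (c • h) = c • ThetaY h := by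
  unfold ThetaY
  have h1 : ∀ k : ℕ+, pv k * MvPolynomial.pderiv (Sum.inr (k : ℕ)) (c • h)
      = c • (pv k * MvPolynomial.pderiv (Sum.inr (k : ℕ)) h) :=
    fun k => by rw [Derivation.map_smul, mul_smul_comm]
  rw [finsum_congr h1, ← smul_finsum' c (ThetaY_support h)]

lemma ThetaY_sum {ι : Type*} (s : Finset ι) (φ : ι → PY) :
    ThetaY (∑ i ∈ s, φ i) = ∑ i ∈ s, ThetaY (φ i) := by
  classical
  induction s using Finset.induction_on with
  | empty => simpa using ThetaY_zero
  | insert _ _ hx ih => rw [Finset.sum_insert hx, Finset.sum_insert hx, ThetaY_add, ih]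

/-! #### Action on basic elements -/

lemma Yplus_yv_mul (b : ℕ) {q : PY} (hq : YFree q) : Yplus (yv b * q) = yv (b + 1) * q := by
  unfold Yplus
  rw [finsum_eq_single _ b]
  · rw [pderiv_inr_yv_mul _ _ hq, if_pos rfl]
  · intro k hk
    rw [pderiv_inr_yv_mul _ _ hq, if_neg hk, mul_zero]

lemma Yplus_iter_yv_mul (a b : ℕ) {q : PY} (hq : YFree q) :
    Yplus^[a] (yv b * q) = yv (b + a) * q := by
  induction a with
  | zero => rfl
  | succ a ih =>
      rw [Function.iterate_succ_apply', ih, Yplus_yv_mul _ hq, ← add_assoc]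

lemma Yplus_iter_add (a : ℕ) (h1 h2 : PY) :
    Yplus^[a] (h1 + h2) = Yplus^[a] h1 + Yplus^[a] h2 := by
  induction a with
  | zero => rfl
  | succ a ih => simp only [Function.iterate_succ_apply', ih, Yplus_add]

lemma Yplus_iter_smul (a : ℕ) (c : F) (h : PY) :
    Yplus^[a] (c • h) = c • Yplus^[a] h := by
  induction a with
  | zero => rfl
  | succ a ih => simp only [Function.iterate_succ_apply', ih, Yplus_smul]

lemma Yplus_iter_sum {ι : Type*} (a : ℕ) (s : Finset ι) (φ : ι → PY) :
    Yplus^[a] (∑ i ∈ s, φ i) = ∑ i ∈ s, Yplus^[a] (φ i) := by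
  induction a with
  | zero => rfl
  | succ a ih => simp only [Function.iterate_succ_apply', ih, Yplus_sum]

lemma ThetaY_yv_mul (m : ℕ) (hm : 0 < m) {q : PY} (hq : YFree q) :
    ThetaY (yv m * q) = pn m * q := by
  unfold ThetaY
  have h0 : ∀ i : ℕ+, i ≠ ⟨m, hm⟩ →
      pv i * MvPolynomial.pderiv (Sum.inr (i : ℕ)) (yv m * q) = 0 := by
    intro i hi
    rw [pderiv_inr_yv_mul _ _ hq, if_neg, mul_zero]
    intro hc
    exact hi (PNat.coe_injective hc)
  refine (finsum_eq_single _ (⟨m, hm⟩ : ℕ+) h0).trans ?_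
  simp [pderiv_inr_yv_mul _ _ hq, pn, dif_pos hm]

/-! #### `wordOp` basics -/

lemma wordOp_cons (b : Bool) (w : List Bool) (h : PY) :
    wordOp (b :: w) h = (if b then Yplus else GammaY) (wordOp w h) := rfl

lemma wordOp_append (w1 w2 : List Bool) (h : PY) :
    wordOp (w1 ++ w2) h = wordOp w1 (wordOp w2 h) := by
  induction w1 with
  | nil => rfl
  | cons b w ih => rw [List.cons_append, wordOp_cons, wordOp_cons, ih]

lemma wordOp_replicate_true (a : ℕ) (h : PY) :
    wordOp (List.replicate a true) h = Yplus^[a] h := by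
  induction a with
  | zero => rfl
  | succ a ih =>
      rw [List.replicate_succ, wordOp_cons, if_pos rfl, ih, Function.iterate_succ_apply']

/-! #### Converting `ℕ+`-finsums with bounded support to range sums -/

lemma finsum_pnat_eq_sum_range {M : Type*} [AddCommMonoid M] (φ : ℕ+ → M) (N : ℕ)
    (h : ∀ i : ℕ+, N < (i : ℕ) → φ i = 0) :
    ∑ᶠ i : ℕ+, φ i = ∑ c ∈ Finset.range N, φ ⟨c + 1, c.succ_pos⟩ := by
  have hemb : Function.Injective fun c : ℕ => (⟨c + 1, c.succ_pos⟩ : ℕ+) := by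
    intro a b hab
    have := congrArg (fun x : ℕ+ => (x : ℕ)) hab
    simpa using this
  have hsub : Function.support φ ⊆
      ((Finset.range N).map ⟨fun c => (⟨c + 1, c.succ_pos⟩ : ℕ+), hemb⟩ : Finset ℕ+) := by
    intro i hi
    simp only [Function.mem_support] at hi
    have hle : (i : ℕ) ≤ N := by
      by_contra hlt
      exact hi (h i (lt_of_not_ge hlt))
    have hpos : 0 < (i : ℕ) := i.2
    simp only [Finset.coe_map, Set.mem_image, Finset.mem_coe, Finset.mem_range,
      Function.Embedding.coeFn_mk]
    refine ⟨(i : ℕ) - 1, by omega, ?_⟩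
    apply PNat.coe_injective
    show (i : ℕ) - 1 + 1 = (i : ℕ)
    omega
  rw [finsum_eq_sum_of_support_subset φ hsub, Finset.sum_map]
  rfl

end Statement16Aux

namespace Statement16Aux

open MvPolynomial Finset

/-! #### The action of `GammaY` on `yv b * q` -/

lemma GammaY_yv_mul (b : ℕ) {q : PY} (hq : YFree q)
    (V : Finset ℕ+) (hV : ∀ j : ℕ+, j ∉ V → MvPolynomial.pderiv (Sum.inl j) q = 0) :
    GammaY (yv b * q) =
      alpha • (∑ j ∈ V, ((j : ℕ) : F) •
          (yv (b + 1 + (j : ℕ)) * MvPolynomial.pderiv (Sum.inl j) q))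
      + (∑ c ∈ Finset.range b, yv (c + 1) * (pn (b - c) * q))
      + (alpha - 1) • ((b : F) • (yv (b + 1) * q)) := by
  have hT1 : (∑ᶠ i : ℕ+, ∑ᶠ j : ℕ+, ((j : ℕ) : F) •
        (yv ((i : ℕ) + (j : ℕ)) *
          MvPolynomial.pderiv (Sum.inl j)
            (MvPolynomial.pderiv (Sum.inr ((i : ℕ) - 1)) (yv b * q))))
      = ∑ j ∈ V, ((j : ℕ) : F) •
          (yv (b + 1 + (j : ℕ)) * MvPolynomial.pderiv (Sum.inl j) q) := by
    have hzero : ∀ i : ℕ+, i ≠ ⟨b + 1, b.succ_pos⟩ →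
        (∑ᶠ j : ℕ+, ((j : ℕ) : F) • (yv ((i : ℕ) + (j : ℕ)) *
          MvPolynomial.pderiv (Sum.inl j)
            (MvPolynomial.pderiv (Sum.inr ((i : ℕ) - 1)) (yv b * q)))) = 0 := by
      intro i hi
      have hpos : 0 < (i : ℕ) := i.2
      have hne : (i : ℕ) - 1 ≠ b := by
        intro hc
        apply hi
        apply PNat.coe_injective
        show (i : ℕ) = b + 1
        omega
      have hz : MvPolynomial.pderiv (Sum.inr ((i : ℕ) - 1) : ℕ+ ⊕ ℕ) (yv b * q) = 0 := by
        rw [pderiv_inr_yv_mul _ _ hq, if_neg hne]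
      rw [hz]
      have hv : ∀ j : ℕ+, ((j : ℕ) : F) •
          (yv ((i : ℕ) + (j : ℕ)) * MvPolynomial.pderiv (Sum.inl j) (0 : PY)) = 0 :=
        fun j => by rw [map_zero, mul_zero, smul_zero]
      rw [finsum_congr hv, finsum_zero]
    refine (finsum_eq_single _ (⟨b + 1, b.succ_pos⟩ : ℕ+) hzero).trans ?_
    have hstep : ∀ j : ℕ+, ((j : ℕ) : F) •
        (yv (((⟨b + 1, b.succ_pos⟩ : ℕ+) : ℕ) + (j : ℕ)) * MvPolynomial.pderiv (Sum.inl j)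
          (MvPolynomial.pderiv (Sum.inr (((⟨b + 1, b.succ_pos⟩ : ℕ+) : ℕ) - 1)) (yv b * q)))
        = ((j : ℕ) : F) • (yv (b + 1 + (j : ℕ)) * MvPolynomial.pderiv (Sum.inl j) q) := by
      intro j
      show ((j : ℕ) : F) • (yv ((b + 1) + (j : ℕ)) * MvPolynomial.pderiv (Sum.inl j)
          (MvPolynomial.pderiv (Sum.inr (b + 1 - 1)) (yv b * q)))
        = ((j : ℕ) : F) • (yv (b + 1 + (j : ℕ)) * MvPolynomial.pderiv (Sum.inl j) q)
      rw [pderiv_inr_yv_mul _ _ hq, if_pos (by omega : b + 1 - 1 = b)]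
    refine (finsum_congr hstep).trans ?_
    refine (finsum_eq_sum_of_support_subset _ (s := V) ?_).trans ?_
    · intro j hj
      simp only [Function.mem_support] at hj
      by_contra hjV
      rw [hV j hjV, mul_zero, smul_zero] at hj
      exact hj rfl
    · rfl
  have hT2 : (∑ᶠ i : ℕ+, ∑ᶠ j : ℕ+, yv (i : ℕ) * pv j *
        MvPolynomial.pderiv (Sum.inr ((i : ℕ) + (j : ℕ) - 1)) (yv b * q))
      = ∑ c ∈ Finset.range b, yv (c + 1) * (pn (b - c) * q) := by
    have hout : ∀ i : ℕ+, b < (i : ℕ) →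
        (∑ᶠ j : ℕ+, yv (i : ℕ) * pv j *
          MvPolynomial.pderiv (Sum.inr ((i : ℕ) + (j : ℕ) - 1)) (yv b * q)) = 0 := by
      intro i hi
      have hv : ∀ j : ℕ+, yv (i : ℕ) * pv j *
          MvPolynomial.pderiv (Sum.inr ((i : ℕ) + (j : ℕ) - 1) : ℕ+ ⊕ ℕ) (yv b * q) = 0 := by
        intro j
        have h1 : 0 < (j : ℕ) := j.2
        rw [pderiv_inr_yv_mul _ _ hq, if_neg (by omega), mul_zero]
      rw [finsum_congr hv, finsum_zero]
    refine (finsum_pnat_eq_sum_range _ b hout).trans ?_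
    apply Finset.sum_congr rfl
    intro c hc
    rw [Finset.mem_range] at hc
    have hzero : ∀ j : ℕ+, j ≠ ⟨b - c, by omega⟩ →
        yv (((⟨c + 1, c.succ_pos⟩ : ℕ+)) : ℕ) * pv j *
          MvPolynomial.pderiv
            (Sum.inr ((((⟨c + 1, c.succ_pos⟩ : ℕ+)) : ℕ) + (j : ℕ) - 1)) (yv b * q) = 0 := by
      intro j hj
      have h1 : 0 < (j : ℕ) := j.2
      have h2 : (j : ℕ) ≠ b - c := fun hc' => hj (PNat.coe_injective hc')
      rw [pderiv_inr_yv_mul _ _ hq, if_neg (by show c + 1 + (j : ℕ) - 1 ≠ b; omega), mul_zero]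
    refine (finsum_eq_single _ (⟨b - c, by omega⟩ : ℕ+) hzero).trans ?_
    rw [pderiv_inr_yv_mul _ _ hq, if_pos (by show c + 1 + (b - c) - 1 = b; omega)]
    rw [pn, dif_pos (by omega : 0 < b - c), mul_assoc]
  have hT3 : (∑ᶠ i : ℕ+, ((i : ℕ) : F) •
        (yv ((i : ℕ) + 1) * MvPolynomial.pderiv (Sum.inr (i : ℕ)) (yv b * q)))
      = (b : F) • (yv (b + 1) * q) := by
    cases b with
    | zero =>
        have hv : ∀ i : ℕ+, ((i : ℕ) : F) •
            (yv ((i : ℕ) + 1) * MvPolynomial.pderiv (Sum.inr (i : ℕ) : ℕ+ ⊕ ℕ)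
              (yv 0 * q)) = 0 := by
          intro i
          have h1 : 0 < (i : ℕ) := i.2
          rw [pderiv_inr_yv_mul _ _ hq, if_neg (by omega), mul_zero, smul_zero]
        rw [finsum_congr hv, finsum_zero, Nat.cast_zero, zero_smul]
    | succ m =>
        have hzero : ∀ i : ℕ+, i ≠ ⟨m + 1, m.succ_pos⟩ →
            ((i : ℕ) : F) • (yv ((i : ℕ) + 1) *
              MvPolynomial.pderiv (Sum.inr (i : ℕ) : ℕ+ ⊕ ℕ) (yv (m + 1) * q)) = 0 := by
          intro i hi
          have h2 : (i : ℕ) ≠ m + 1 := fun hc => hi (PNat.coe_injective hc)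
          rw [pderiv_inr_yv_mul _ _ hq, if_neg h2, mul_zero, smul_zero]
        refine (finsum_eq_single _ (⟨m + 1, m.succ_pos⟩ : ℕ+) hzero).trans ?_
        show ((m + 1 : ℕ) : F) • (yv ((m + 1) + 1) *
            MvPolynomial.pderiv (Sum.inr (m + 1)) (yv (m + 1) * q))
          = ((m + 1 : ℕ) : F) • (yv (m + 1 + 1) * q)
        rw [pderiv_inr_yv_mul _ _ hq, if_pos rfl]
  rw [GammaY, hT1, hT2, hT3]

/-! #### `dropY` computations -/

lemma dropY_pv (i : ℕ+) : dropY (pv i) = MvPolynomial.X i := by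
  rw [dropY, pv, MvPolynomial.aeval_X]

lemma dropY_pn (m : ℕ) (hm : 0 < m) : dropY (pn m) = MvPolynomial.X ⟨m, hm⟩ := by
  rw [pn, dif_pos hm]
  exact dropY_pv _

lemma dropY_rename (f : SymA) : dropY (MvPolynomial.rename Sum.inl f) = f := by
  rw [dropY, MvPolynomial.aeval_rename]
  exact MvPolynomial.aeval_X_left_apply f

/-! #### Word manipulation -/

lemma ofFn_decide_ne (n : ℕ) (a : Fin (n + 1)) :
    List.ofFn (fun i => decide (i ≠ a)) =
      List.replicate (a : ℕ) true ++ false :: List.replicate (n - (a : ℕ)) true := by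
  induction n with
  | zero =>
      have ha : a = 0 := Fin.fin_one_eq_zero a
      subst ha
      simp [List.ofFn_succ]
  | succ n ih =>
      rcases Fin.eq_zero_or_eq_succ a with rfl | ⟨a', rfl⟩
      · rw [List.ofFn_succ]
        have h0 : decide ((0 : Fin (n + 2)) ≠ 0) = false := by simp
        have h1 : (fun i : Fin (n + 1) => decide (i.succ ≠ 0)) = fun _ => true := by
          funext i
          simp [Fin.succ_ne_zero]
        rw [h0, h1, List.ofFn_const]
        simp
      · rw [List.ofFn_succ]
        have h0 : decide ((0 : Fin (n + 2)) ≠ a'.succ) = true := by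
          simp [(Fin.succ_ne_zero a').symm]
        have h1 : (fun i : Fin (n + 1) => decide (i.succ ≠ a'.succ)) =
            fun i => decide (i ≠ a') := by
          funext i
          simp [Fin.succ_inj]
        rw [h0, h1, ih a']
        simp [Fin.val_succ, List.replicate_succ]

/-! #### Identifying the index sets in `Bc` -/

lemma filter_all (n : ℕ) :
    (Finset.univ.filter fun s : Fin n → Bool =>
      (Finset.univ.filter fun i => s i = true).card = n) = {fun _ => true} := by
  ext s
  simp only [Finset.mem_filter, Finset.mem_univ, true_and, Finset.mem_singleton]
  constructor
  · intro h
    have huniv : (Finset.univ.filter fun i => s i = true) = Finset.univ :=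
      Finset.eq_univ_of_card _ (by simpa using h)
    funext i
    have hmem : i ∈ Finset.univ.filter fun i => s i = true := by
      rw [huniv]; exact Finset.mem_univ i
    exact (Finset.mem_filter.mp hmem).2
  · rintro rfl
    simp

lemma filter_one (n : ℕ) :
    (Finset.univ.filter fun s : Fin (n + 1) → Bool =>
      (Finset.univ.filter fun i => s i = true).card = n)
    = Finset.univ.image fun a : Fin (n + 1) => fun i => decide (i ≠ a) := by
  ext s
  simp only [Finset.mem_filter, Finset.mem_univ, true_and, Finset.mem_image]
  constructor
  · intro h
    have hsplit := Finset.card_filter_add_card_filter_not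
      (s := (Finset.univ : Finset (Fin (n + 1)))) (p := fun i => s i = true)
    rw [Finset.card_univ, Fintype.card_fin, h] at hsplit
    have hfalse : (Finset.univ.filter fun i => ¬ (s i = true)).card = 1 := by omega
    obtain ⟨a, ha⟩ := Finset.card_eq_one.mp hfalse
    refine ⟨a, ?_⟩
    funext i
    by_cases hia : i = a
    · subst hia
      have hmem : i ∈ Finset.univ.filter fun j => ¬ (s j = true) := by
        rw [ha]; exact Finset.mem_singleton_self i
      have h2 : ¬ (s i = true) := (Finset.mem_filter.mp hmem).2
      have hsa : s i = false := by
        cases hxa : s i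
        · rfl
        · exact absurd hxa h2
      rw [hsa]
      simp
    · have hmem : i ∉ Finset.univ.filter fun j => ¬ (s j = true) := by
        rw [ha]
        simp [hia]
      have h2 : s i = true := by
        by_contra hns
        exact hmem (Finset.mem_filter.mpr ⟨Finset.mem_univ i, hns⟩)
      rw [h2]
      simp [hia]
  · rintro ⟨a, rfl⟩
    have herase : (Finset.univ.filter fun i : Fin (n + 1) => decide (i ≠ a) = true)
        = Finset.univ.erase a := by
      ext i
      simp [Finset.mem_erase]
    rw [herase, Finset.card_erase_of_mem (Finset.mem_univ a), Finset.card_univ,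
      Fintype.card_fin]
    rfl

lemma decide_ne_injective (n : ℕ) :
    ∀ a ∈ (Finset.univ : Finset (Fin (n + 1))), ∀ b ∈ (Finset.univ : Finset (Fin (n + 1))),
      (fun i => decide (i ≠ a)) = (fun i => decide (i ≠ b)) → a = b := by
  intro a _ b _ hab
  by_contra hne
  have := congrFun hab a
  simp [hne] at this

end Statement16Aux

namespace Statement16Aux

open MvPolynomial Finset

lemma alpha_ne_zero : alpha ≠ 0 := RatFunc.X_ne_zero

lemma two_ne_zero_F : (2 : F) ≠ 0 := by
  have h : (algebraMap (Polynomial ℚ) (RatFunc ℚ)) 2 ≠ 0 := by simp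
  rwa [map_ofNat] at h

lemma yfree_q0 (f : SymA) : YFree (alpha⁻¹ • MvPolynomial.rename Sum.inl f) :=
  yfree_smul _ (yfree_rename f)

lemma pderiv_inl_q0 (f : SymA) (j : ℕ+) :
    MvPolynomial.pderiv (Sum.inl j)
        ((alpha⁻¹ • MvPolynomial.rename Sum.inl f : PY))
      = (alpha⁻¹ • MvPolynomial.rename Sum.inl (MvPolynomial.pderiv j f) : PY) := by
  rw [Derivation.map_smul, MvPolynomial.pderiv_rename Sum.inl_injective]

lemma hV_q0 (f : SymA) : ∀ j : ℕ+, j ∉ f.vars →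
    MvPolynomial.pderiv (Sum.inl j)
      ((alpha⁻¹ • MvPolynomial.rename Sum.inl f : PY)) = 0 := by
  intro j hj
  rw [pderiv_inl_q0, MvPolynomial.pderiv_eq_zero_of_notMem_vars hj, map_zero, smul_zero]

lemma Xn_pos (m : ℕ) (hm : 0 < m) : Xn m = MvPolynomial.X (⟨m, hm⟩ : ℕ+) := dif_pos hm

lemma dropY_pn' (m : ℕ) (hm : 0 < m) : dropY (pn m) = Xn m := by
  rw [dropY_pn m hm, Xn, dif_pos hm]

lemma word_eval (n a : ℕ) (ha : a ≤ n) (f : SymA) :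
    wordOp (List.replicate a true ++ false :: List.replicate (n - a) true)
        (yv 0 * (alpha⁻¹ • MvPolynomial.rename Sum.inl f))
    = alpha • (∑ j ∈ f.vars, ((j : ℕ) : F) •
          (yv (n + 1 + (j : ℕ)) *
            (alpha⁻¹ • MvPolynomial.rename Sum.inl (MvPolynomial.pderiv j f))))
      + (∑ c ∈ Finset.range (n - a), yv (c + 1 + a) *
          (pn (n - a - c) * (alpha⁻¹ • MvPolynomial.rename Sum.inl f)))
      + (alpha - 1) • (((n - a : ℕ) : F) •
          (yv (n + 1) * (alpha⁻¹ • MvPolynomial.rename Sum.inl f))) := by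
  have hq : YFree (alpha⁻¹ • MvPolynomial.rename Sum.inl f) := yfree_q0 f
  rw [wordOp_append,
    show wordOp (false :: List.replicate (n - a) true)
        (yv 0 * (alpha⁻¹ • MvPolynomial.rename Sum.inl f))
      = GammaY (wordOp (List.replicate (n - a) true)
        (yv 0 * (alpha⁻¹ • MvPolynomial.rename Sum.inl f))) from rfl,
    wordOp_replicate_true, wordOp_replicate_true, Yplus_iter_yv_mul _ _ hq, Nat.zero_add,
    GammaY_yv_mul (n - a) hq f.vars (hV_q0 f), Yplus_iter_add, Yplus_iter_add,
    Yplus_iter_smul, Yplus_iter_smul, Yplus_iter_smul, Yplus_iter_sum, Yplus_iter_sum]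
  congr 1
  congr 1
  · congr 1
    apply Finset.sum_congr rfl
    intro j _
    rw [pderiv_inl_q0, Yplus_iter_smul,
      Yplus_iter_yv_mul _ _ (yfree_smul _ (yfree_rename _))]
    have he : n - a + 1 + (j : ℕ) + a = n + 1 + (j : ℕ) := by omega
    rw [he]
  · apply Finset.sum_congr rfl
    intro c _
    rw [Yplus_iter_yv_mul _ _ (yfree_pn_mul _ hq)]
  · rw [Yplus_iter_yv_mul _ _ hq]
    have he : n - a + 1 + a = n + 1 := by omega
    rw [he]

lemma term_eval (n a : ℕ) (ha : a ≤ n) (f : SymA) :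
    dropY (ThetaY (wordOp (List.replicate a true ++ false :: List.replicate (n - a) true)
        (yv 0 * (alpha⁻¹ • MvPolynomial.rename Sum.inl f))))
    = alpha • (∑ j ∈ f.vars, ((j : ℕ) : F) •
          (Xn (n + 1 + (j : ℕ)) * (alpha⁻¹ • MvPolynomial.pderiv j f)))
      + (∑ c ∈ Finset.range (n - a), Xn (c + 1 + a) * (Xn (n - a - c) * (alpha⁻¹ • f)))
      + (alpha - 1) • (((n - a : ℕ) : F) • (Xn (n + 1) * (alpha⁻¹ • f))) := by
  rw [word_eval n a ha f]
  have h1 : dropY (ThetaY (alpha • (∑ j ∈ f.vars, ((j : ℕ) : F) •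
        (yv (n + 1 + (j : ℕ)) *
          (alpha⁻¹ • MvPolynomial.rename Sum.inl (MvPolynomial.pderiv j f))))))
      = alpha • (∑ j ∈ f.vars, ((j : ℕ) : F) •
          (Xn (n + 1 + (j : ℕ)) * (alpha⁻¹ • MvPolynomial.pderiv j f))) := by
    rw [ThetaY_smul, ThetaY_sum, map_smul, map_sum]
    congr 1
    apply Finset.sum_congr rfl
    intro j _
    rw [ThetaY_smul, ThetaY_yv_mul _ (by omega) (yfree_smul _ (yfree_rename _)),
      map_smul, map_mul, dropY_pn' _ (by omega), map_smul, dropY_rename]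
  have h2 : dropY (ThetaY (∑ c ∈ Finset.range (n - a), yv (c + 1 + a) *
        (pn (n - a - c) * (alpha⁻¹ • MvPolynomial.rename Sum.inl f))))
      = ∑ c ∈ Finset.range (n - a), Xn (c + 1 + a) * (Xn (n - a - c) * (alpha⁻¹ • f)) := by
    rw [ThetaY_sum, map_sum]
    apply Finset.sum_congr rfl
    intro c hc
    rw [Finset.mem_range] at hc
    rw [ThetaY_yv_mul _ (by omega) (yfree_pn_mul _ (yfree_q0 f)), map_mul, map_mul,
      dropY_pn' _ (by omega), dropY_pn' _ (by omega), map_smul, dropY_rename]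
  have h3 : dropY (ThetaY ((alpha - 1) • (((n - a : ℕ) : F) •
        (yv (n + 1) * (alpha⁻¹ • MvPolynomial.rename Sum.inl f)))))
      = (alpha - 1) • (((n - a : ℕ) : F) • (Xn (n + 1) * (alpha⁻¹ • f))) := by
    rw [ThetaY_smul, ThetaY_smul, ThetaY_yv_mul _ (by omega) (yfree_q0 f),
      map_smul, map_smul, map_mul, dropY_pn' _ (by omega), map_smul, dropY_rename]
  rw [ThetaY_add, ThetaY_add, map_add, map_add, h1, h2, h3]

lemma Bc_diag (n : ℕ) (hn : 0 < n) (f : SymA) :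
    Bc n n f = alpha⁻¹ • (Xn n * f) := by
  rw [Bc, filter_all, Finset.sum_singleton, List.ofFn_const,
    show alpha⁻¹ • (yv 0 * MvPolynomial.rename Sum.inl f)
      = yv 0 * (alpha⁻¹ • MvPolynomial.rename Sum.inl f) from (mul_smul_comm _ _ _).symm,
    wordOp_replicate_true, Yplus_iter_yv_mul _ _ (yfree_q0 f), Nat.zero_add,
    ThetaY_yv_mul _ hn (yfree_q0 f), map_mul, dropY_pn' _ hn, map_smul, dropY_rename,
    mul_smul_comm]

lemma Bc_once (n : ℕ) (f : SymA) :
    Bc (n + 1) n f =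
      ∑ a : Fin (n + 1),
        (alpha • (∑ j ∈ f.vars, ((j : ℕ) : F) •
            (Xn (n + 1 + (j : ℕ)) * (alpha⁻¹ • MvPolynomial.pderiv j f)))
        + (∑ c ∈ Finset.range (n - (a : ℕ)), Xn (c + 1 + (a : ℕ)) *
            (Xn (n - (a : ℕ) - c) * (alpha⁻¹ • f)))
        + (alpha - 1) • (((n - (a : ℕ) : ℕ) : F) • (Xn (n + 1) * (alpha⁻¹ • f)))) := by
  rw [Bc, filter_one, Finset.sum_image (decide_ne_injective n), ThetaY_sum, map_sum]
  apply Finset.sum_congr rfl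
  intro a _
  rw [ofFn_decide_ne n a,
    show alpha⁻¹ • (yv 0 * MvPolynomial.rename Sum.inl f)
      = yv 0 * (alpha⁻¹ • MvPolynomial.rename Sum.inl f) from (mul_smul_comm _ _ _).symm,
    term_eval n (a : ℕ) (by omega) f]

lemma nat_sum_reflect (n : ℕ) : ∑ a ∈ Finset.range (n + 1), (n - a) = Nat.choose (n + 1) 2 := by
  have h : ∑ a ∈ Finset.range (n + 1), (n - a) = ∑ j ∈ Finset.range (n + 1), j :=
    (Finset.sum_congr rfl (fun a _ => by omega : ∀ a ∈ Finset.range (n + 1),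
      n - a = n + 1 - 1 - a)).trans (Finset.sum_range_reflect (fun i => i) (n + 1))
  have h2 := Finset.sum_range_id_mul_two (n + 1)
  simp only [Nat.add_sub_cancel] at h2
  have h3 : Nat.choose (n + 1) 2 = (n + 1) * n / 2 := by
    rw [Nat.choose_two_right]
    simp
  rw [h, h3]
  omega

lemma middle_sum (n : ℕ) (g : SymA) :
    ∑ a : Fin (n + 1), ∑ c ∈ Finset.range (n - (a : ℕ)),
        Xn (c + 1 + (a : ℕ)) * (Xn (n - (a : ℕ) - c) * g)
    = ∑ d ∈ Finset.range n, (d + 1) • (Xn (d + 1) * (Xn (n - d) * g)) := by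
  have hsum : ∀ a ∈ Finset.range (n + 1),
      (∑ c ∈ Finset.range (n - a), Xn (c + 1 + a) * (Xn (n - a - c) * g))
      = ∑ d ∈ Finset.range n, (if a ≤ d then Xn (d + 1) * (Xn (n - d) * g) else 0) := by
    intro a ha
    rw [Finset.mem_range] at ha
    have h1 : ∀ c ∈ Finset.range (n - a), Xn (c + 1 + a) * (Xn (n - a - c) * g)
        = Xn ((a + c) + 1) * (Xn (n - (a + c)) * g) := by
      intro c hc
      rw [Finset.mem_range] at hc
      have e1 : c + 1 + a = (a + c) + 1 := by omega
      have e2 : n - a - c = n - (a + c) := by omega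
      rw [e1, e2]
    rw [Finset.sum_congr rfl h1,
      ← Finset.sum_Ico_eq_sum_range (f := fun d => Xn (d + 1) * (Xn (n - d) * g))
        (m := a) (n := n), ← Finset.sum_filter]
    congr 1
    ext d
    simp only [Finset.mem_Ico, Finset.mem_filter, Finset.mem_range]
    omega
  rw [Fin.sum_univ_eq_sum_range
    (fun a => ∑ c ∈ Finset.range (n - a), Xn (c + 1 + a) * (Xn (n - a - c) * g)) (n + 1),
    Finset.sum_congr rfl hsum, Finset.sum_comm]
  apply Finset.sum_congr rfl
  intro d hd
  rw [Finset.mem_range] at hd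
  rw [← Finset.sum_filter]
  have hfil : (Finset.range (n + 1)).filter (fun a => a ≤ d) = Finset.range (d + 1) := by
    ext a
    simp only [Finset.mem_filter, Finset.mem_range]
    omega
  rw [hfil, Finset.sum_const, Finset.card_range]

lemma weighted_sym (n : ℕ) (W : ℕ → SymA) (hW : ∀ d < n, W (n - 1 - d) = W d) :
    ∑ d ∈ Finset.range n, ((d + 1 : ℕ) : F) • W d
      = (((n + 1 : ℕ) : F) / 2) • ∑ d ∈ Finset.range n, W d := by
  have hrefl : ∑ d ∈ Finset.range n, ((d + 1 : ℕ) : F) • W d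
      = ∑ d ∈ Finset.range n, ((n - d : ℕ) : F) • W d := by
    rw [← Finset.sum_range_reflect (fun d => ((d + 1 : ℕ) : F) • W d) n]
    apply Finset.sum_congr rfl
    intro d hd
    rw [Finset.mem_range] at hd
    rw [hW d hd]
    have e : n - 1 - d + 1 = n - d := by omega
    rw [e]
  have h2 : (2 : F) • (∑ d ∈ Finset.range n, ((d + 1 : ℕ) : F) • W d)
      = ((n + 1 : ℕ) : F) • ∑ d ∈ Finset.range n, W d := by
    rw [two_smul]
    nth_rewrite 2 [hrefl]
    rw [← Finset.sum_add_distrib, Finset.smul_sum]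
    apply Finset.sum_congr rfl
    intro d hd
    rw [Finset.mem_range] at hd
    rw [← add_smul, ← Nat.cast_add]
    congr 2
    omega
  have h2' := congrArg (fun x => (2 : F)⁻¹ • x) h2
  simp only [smul_smul] at h2'
  rw [inv_mul_cancel₀ two_ne_zero_F, one_smul] at h2'
  rw [h2', div_eq_mul_inv, mul_comm]

end Statement16Aux

open Statement16Aux in
/-- **Lemma 6.5, Eqs. (6.3)–(6.4).** For `ℓ ≥ 1`:
`C_{ℓ,0}^{(α)} = p_ℓ/α` and
`C_{ℓ,1}^{(α)} = C(ℓ+1,2)(b/α) p_{ℓ+1} + (ℓ+1) ∑_{m≥1} p_{m+ℓ+1} (m ∂/∂p_m)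
 + ((ℓ+1)/(2α)) ∑_{1≤i≤ℓ} p_i p_{ℓ+1-i}`, with `b = α-1`. -/
theorem statement16 (ℓ : ℕ+) :
    (∀ f : SymA, Clk (ℓ : ℕ) 0 f = alpha⁻¹ • (MvPolynomial.X ℓ * f)) ∧
    (∀ f : SymA, Clk (ℓ : ℕ) 1 f =
      ((Nat.choose ((ℓ : ℕ) + 1) 2 : F) * (alpha - 1) / alpha) •
          (MvPolynomial.X (ℓ + 1) * f)
        + (((ℓ : ℕ) + 1 : ℕ) : F) •
            ∑ᶠ m : ℕ+, MvPolynomial.X (m + ℓ + 1) * (((m : ℕ) : F) • MvPolynomial.pderiv m f)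
        + ((((ℓ : ℕ) + 1 : ℕ) : F) / (2 * alpha)) •
            ∑ᶠ i : ℕ+, ∑ᶠ j : ℕ+,
              if i + j = ℓ + 1 then MvPolynomial.X i * MvPolynomial.X j * f else 0) := by
  have hXn1 : Xn ((ℓ : ℕ) + 1) = MvPolynomial.X (ℓ + 1) := by
    rw [Xn_pos _ (by omega : 0 < (ℓ : ℕ) + 1)]
    congr 1
  constructor
  · intro f
    show Bc ((ℓ : ℕ) + 0) (ℓ : ℕ) f = alpha⁻¹ • (MvPolynomial.X ℓ * f)
    rw [Nat.add_zero, Bc_diag (ℓ : ℕ) ℓ.2 f, Xn_pos (ℓ : ℕ) ℓ.2]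
    rfl
  · intro f
    set n : ℕ := (ℓ : ℕ) with hn
    have hn1 : 0 < n := ℓ.2
    show Bc (n + 1) n f = _
    rw [Bc_once n f, Finset.sum_add_distrib, Finset.sum_add_distrib]
    have E1 : (∑ _a : Fin (n + 1), alpha • (∑ j ∈ f.vars, ((j : ℕ) : F) •
          (Xn (n + 1 + (j : ℕ)) * (alpha⁻¹ • MvPolynomial.pderiv j f))))
        = ((n + 1 : ℕ) : F) •
            ∑ᶠ m : ℕ+, MvPolynomial.X (m + ℓ + 1) *
              (((m : ℕ) : F) • MvPolynomial.pderiv m f) := by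
      rw [Finset.sum_const, Finset.card_univ, Fintype.card_fin,
        ← Nat.cast_smul_eq_nsmul F]
      congr 1
      have hconv : (∑ᶠ m : ℕ+, MvPolynomial.X (m + ℓ + 1) *
            (((m : ℕ) : F) • MvPolynomial.pderiv m f))
          = ∑ j ∈ f.vars, MvPolynomial.X (j + ℓ + 1) *
              (((j : ℕ) : F) • MvPolynomial.pderiv j f) := by
        apply finsum_eq_sum_of_support_subset
        intro m hm
        simp only [Function.mem_support] at hm
        by_contra hmv
        rw [MvPolynomial.pderiv_eq_zero_of_notMem_vars hmv, smul_zero, mul_zero] at hm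
        exact hm rfl
      rw [hconv, Finset.smul_sum]
      apply Finset.sum_congr rfl
      intro j _
      have hx : Xn (n + 1 + (j : ℕ)) = MvPolynomial.X (j + ℓ + 1) := by
        rw [Xn_pos _ (by omega : 0 < n + 1 + (j : ℕ))]
        congr 1
        apply PNat.coe_injective
        show n + 1 + (j : ℕ) = ((j + ℓ + 1 : ℕ+) : ℕ)
        simp only [PNat.add_coe, PNat.one_coe]
        omega
      rw [hx, mul_smul_comm, mul_smul_comm, smul_smul, smul_smul]
      congr 1
      rw [mul_comm alpha ((j : ℕ) : F), mul_assoc, mul_inv_cancel₀ alpha_ne_zero, mul_one]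
    have E3 : (∑ a : Fin (n + 1), (alpha - 1) •
          (((n - (a : ℕ) : ℕ) : F) • (Xn (n + 1) * (alpha⁻¹ • f))))
        = ((Nat.choose (n + 1) 2 : F) * (alpha - 1) / alpha) •
            (MvPolynomial.X (ℓ + 1) * f) := by
      rw [← Finset.smul_sum, ← Finset.sum_smul]
      have hc : (∑ a : Fin (n + 1), ((n - (a : ℕ) : ℕ) : F))
          = ((Nat.choose (n + 1) 2 : ℕ) : F) := by
        rw [← Nat.cast_sum]
        congr 1
        rw [Fin.sum_univ_eq_sum_range (fun a => n - a) (n + 1)]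
        exact nat_sum_reflect n
      rw [hc, hXn1, mul_smul_comm, smul_smul, smul_smul]
      congr 1
      rw [div_eq_mul_inv]
      ring
    have htgt : (∑ᶠ i : ℕ+, ∑ᶠ j : ℕ+,
          if i + j = ℓ + 1 then MvPolynomial.X i * MvPolynomial.X j * f else 0)
        = ∑ d ∈ Finset.range n, Xn (d + 1) * (Xn (n - d) * f) := by
      refine (finsum_pnat_eq_sum_range _ n ?_).trans ?_
      · intro i hi
        have hz : ∀ j : ℕ+,
            (if i + j = ℓ + 1 then MvPolynomial.X i * MvPolynomial.X j * f else 0) = 0 := by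
          intro j
          rw [if_neg]
          intro hc
          have hcc := congrArg (fun x : ℕ+ => (x : ℕ)) hc
          simp only [PNat.add_coe, PNat.one_coe] at hcc
          have hj : 0 < (j : ℕ) := j.2
          omega
        rw [finsum_congr hz, finsum_zero]
      · apply Finset.sum_congr rfl
        intro d hd
        rw [Finset.mem_range] at hd
        have hd0 : 0 < n - d := by omega
        set i₀ : ℕ+ := ⟨d + 1, d.succ_pos⟩ with hi₀
        set j₀ : ℕ+ := ⟨n - d, hd0⟩ with hj₀
        have hi₀c : (i₀ : ℕ) = d + 1 := rfl
        have hj₀c : (j₀ : ℕ) = n - d := rfl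
        have hzero : ∀ j : ℕ+, j ≠ j₀ →
            (if i₀ + j = ℓ + 1 then
              MvPolynomial.X i₀ * MvPolynomial.X j * f else 0) = 0 := by
          intro j hj
          rw [if_neg]
          intro hc
          apply hj
          apply PNat.coe_injective
          have hcc := congrArg (fun x : ℕ+ => (x : ℕ)) hc
          simp only [PNat.add_coe, PNat.one_coe, hi₀c] at hcc
          rw [hj₀c]
          omega
        refine (finsum_eq_single _ j₀ hzero).trans ?_
        rw [if_pos]
        · rw [Xn_pos _ (by omega : 0 < d + 1), Xn_pos _ hd0, mul_assoc]
          rfl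
        · apply PNat.coe_injective
          rw [PNat.add_coe, PNat.add_coe, PNat.one_coe, hi₀c, hj₀c]
          omega
    have E2 : (∑ a : Fin (n + 1), ∑ c ∈ Finset.range (n - (a : ℕ)),
          Xn (c + 1 + (a : ℕ)) * (Xn (n - (a : ℕ) - c) * (alpha⁻¹ • f)))
        = (((n + 1 : ℕ) : F) / (2 * alpha)) •
            ∑ᶠ i : ℕ+, ∑ᶠ j : ℕ+,
              if i + j = ℓ + 1 then MvPolynomial.X i * MvPolynomial.X j * f else 0 := by
      rw [middle_sum n (alpha⁻¹ • f)]
      have hterm : ∀ d ∈ Finset.range n, (d + 1) •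
            (Xn (d + 1) * (Xn (n - d) * (alpha⁻¹ • f)))
          = ((d + 1 : ℕ) : F) • (Xn (d + 1) * (Xn (n - d) * (alpha⁻¹ • f))) :=
        fun d _ => (Nat.cast_smul_eq_nsmul F _ _).symm
      rw [Finset.sum_congr rfl hterm,
        weighted_sym n (fun d => Xn (d + 1) * (Xn (n - d) * (alpha⁻¹ • f))) ?hsym]
      case hsym =>
        intro d hd
        have e1 : n - 1 - d + 1 = n - d := by omega
        have e2 : n - (n - 1 - d) = d + 1 := by omega
        rw [e1, e2]
        ring
      have hW2 : ∀ d ∈ Finset.range n, Xn (d + 1) * (Xn (n - d) * (alpha⁻¹ • f))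
          = alpha⁻¹ • (Xn (d + 1) * (Xn (n - d) * f)) := by
        intro d _
        rw [mul_smul_comm, mul_smul_comm]
      rw [Finset.sum_congr rfl hW2, ← Finset.smul_sum, smul_smul, htgt]
      congr 1
      rw [div_eq_mul_inv, div_eq_mul_inv, mul_inv]
      ring
    rw [E1, E2, E3]
    abel

end
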